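/- Let N ≥ 2, h = 1/N, m ≥ 1, and let C(β, z) = h·(1 + ∑_{k∈ℤ, N∤k} exp(2πik(hβ − z))·L(k)/k^{2m}) with L(k) = (∑_{γ∈ℤ} h^{2m}/(γ − kh)^{2m})^{−1}. Then the coefficients interpolate: for integers β, β' with 1 ≤ β, β' ≤ N, C(β, hβ') = δ_{ββ'} (Kronecker delta), i.e. C(β, hβ') = 1 if β = β' and 0 otherwise. -/

import Mathlib

/-- `L(k) = (∑_{γ ∈ ℤ} h^{2m}/(γ − kh)^{2m})⁻¹` with `h = 1/N`. -/
noncomputable def Lcoeff (N m : ℕ) (k : ℤ) : ℝ :=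
  (∑' γ : ℤ, ((1 : ℝ) / N) ^ (2 * m) / ((γ : ℝ) - (k : ℝ) / N) ^ (2 * m))⁻¹

/-- Optimal interpolation coefficient
`C(β,z) = h(1 + ∑_{k∈ℤ, N∤k} e^{2πik(hβ−z)} L(k)/k^{2m})`, `h = 1/N`. -/
noncomputable def Ccoeff (N m : ℕ) (β : ℕ) (z : ℝ) : ℂ :=
  (1 / (N : ℂ)) * (1 + ∑' k : {k : ℤ // ¬ (N : ℤ) ∣ k},
    Complex.exp (2 * Real.pi * Complex.I * ((k : ℤ) : ℂ) * (((β : ℝ) / N - z : ℝ) : ℂ)) *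
      (Lcoeff N m k : ℂ) / (((k : ℤ) : ℂ)) ^ (2 * m))


open Complex

noncomputable def Sval (N m : ℕ) (j : ℤ) : ℝ :=
  ∑' t : ℤ, 1 / ((N : ℝ) * t + j) ^ (2 * m)

lemma summable_int_pow (m : ℕ) (hm : 1 ≤ m) :
    Summable (fun n : ℤ => 1 / (n : ℝ) ^ (2 * m)) := by
  rw [Real.summable_one_div_int_pow]; omega

lemma summable_Sterm (N m : ℕ) (hN : N ≠ 0) (hm : 1 ≤ m) (j : ℤ) :
    Summable (fun t : ℤ => 1 / ((N : ℝ) * t + j) ^ (2 * m)) := by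
  have h : (fun t : ℤ => 1 / ((N : ℝ) * t + j) ^ (2 * m)) =
      (fun n : ℤ => 1 / (n : ℝ) ^ (2 * m)) ∘ (fun t : ℤ => (N : ℤ) * t + j) := by
    funext t; simp only [Function.comp]; push_cast; ring_nf
  rw [h]
  refine (summable_int_pow m hm).comp_injective ?_
  intro a b hab
  simp only [add_left_inj] at hab
  have hN' : (N:ℤ) ≠ 0 := by exact_mod_cast hN
  exact mul_left_cancel₀ hN' hab

lemma Sterm_nonneg (N m : ℕ) (j : ℤ) (t : ℤ) :
    0 ≤ 1 / ((N : ℝ) * t + j) ^ (2 * m) := by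
  apply div_nonneg zero_le_one
  exact (even_two_mul m).pow_nonneg _

lemma Lcoeff_eq_Sval (N m : ℕ) (hN : N ≠ 0) (k : ℤ) :
    Lcoeff N m k = (Sval N m k)⁻¹ := by
  have hN' : (N : ℝ) ≠ 0 := by exact_mod_cast hN
  unfold Lcoeff Sval
  congr 1
  rw [← (Equiv.neg ℤ).tsum_eq]
  refine tsum_congr fun t => ?_
  have h1 : ((Equiv.neg ℤ t : ℤ) : ℝ) - (k : ℝ) / N = -(((N:ℝ) * t + k) / N) := by
    simp [Equiv.neg]; field_simp; ring
  rw [h1, (even_two_mul m).neg_pow, div_pow, div_pow, div_div_div_comm,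
    div_self (pow_ne_zero _ hN'), div_one, one_pow]

lemma Sval_shift (N m : ℕ) (t j : ℤ) : Sval N m ((N:ℤ) * t + j) = Sval N m j := by
  unfold Sval
  rw [← (Equiv.addRight t).tsum_eq (fun s : ℤ => 1 / ((N : ℝ) * s + j) ^ (2 * m))]
  refine tsum_congr fun s => ?_
  congr 2
  push_cast [Equiv.coe_addRight]
  ring

lemma Sval_lb (N m : ℕ) (hN : 2 ≤ N) (hm : 1 ≤ m) (k : ℤ) (hk : ¬ (N:ℤ) ∣ k) :
    1 / (N : ℝ) ^ (2 * m) ≤ Sval N m k := by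
  have hN0 : (0:ℤ) < N := by positivity
  have hmod0 : 0 ≤ k % N := Int.emod_nonneg k (by omega)
  have hmodne : k % N ≠ 0 := fun h => hk (Int.dvd_of_emod_eq_zero h)
  have hmodlt : k % N < N := Int.emod_lt_of_pos k hN0
  have keyz : (N:ℤ) * (-(k / N)) + k = k % N := by
    linarith [Int.mul_ediv_add_emod k N]
  have key : (N : ℝ) * (-(k / N) : ℤ) + k = ((k % N : ℤ) : ℝ) := by
    exact_mod_cast congrArg (fun x : ℤ => (x : ℝ)) keyz
  calc 1 / (N : ℝ) ^ (2 * m) ≤ 1 / ((N : ℝ) * (-(k / N) : ℤ) + k) ^ (2 * m) := by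
        rw [key]
        apply one_div_le_one_div_of_le
        · positivity
        · apply pow_le_pow_left₀ (by positivity)
          exact_mod_cast hmodlt.le
    _ ≤ Sval N m k := Summable.le_tsum (summable_Sterm N m (by omega) hm k) _
        (fun t _ => Sterm_nonneg N m k t)

lemma Sval_pos (N m : ℕ) (hN : 2 ≤ N) (hm : 1 ≤ m) (k : ℤ) (hk : ¬ (N:ℤ) ∣ k) :
    0 < Sval N m k :=
  lt_of_lt_of_le (by positivity) (Sval_lb N m hN hm k hk)

lemma Lcoeff_le (N m : ℕ) (hN : 2 ≤ N) (hm : 1 ≤ m) (k : ℤ) (hk : ¬ (N:ℤ) ∣ k) :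
    Lcoeff N m k ≤ (N : ℝ) ^ (2 * m) := by
  rw [Lcoeff_eq_Sval N m (by omega) k]
  calc (Sval N m k)⁻¹ ≤ (1 / (N:ℝ)^(2*m))⁻¹ := by
        apply inv_anti₀ (by positivity) (Sval_lb N m hN hm k hk)
    _ = (N:ℝ)^(2*m) := by rw [one_div, inv_inv]

lemma Lcoeff_nonneg (N m : ℕ) (hN : 2 ≤ N) (hm : 1 ≤ m) (k : ℤ) (hk : ¬ (N:ℤ) ∣ k) :
    0 ≤ Lcoeff N m k := by
  rw [Lcoeff_eq_Sval N m (by omega) k]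
  exact (inv_pos.mpr (Sval_pos N m hN hm k hk)).le

def resEquiv (N : ℕ) (hN : 2 ≤ N) :
    (Finset.Ioo (0:ℤ) (N:ℤ)) × ℤ ≃ {k : ℤ // ¬ (N:ℤ) ∣ k} where
  toFun p := ⟨(N:ℤ) * p.2 + p.1.1, by
    obtain ⟨⟨j, hj⟩, t⟩ := p
    rw [Finset.mem_Ioo] at hj
    intro hdvd
    have h2 : (N:ℤ) ∣ j := (dvd_add_right ⟨t, rfl⟩).mp hdvd
    exact absurd (Int.le_of_dvd hj.1 h2) (not_le.mpr hj.2)⟩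
  invFun k := (⟨k.1 % N, by
    rw [Finset.mem_Ioo]
    have hN0 : (0:ℤ) < N := by exact_mod_cast (by omega : 0 < N)
    refine ⟨?_, Int.emod_lt_of_pos k.1 hN0⟩
    rcases (Int.emod_nonneg k.1 hN0.ne').lt_or_eq with h | h
    · exact h
    · exact absurd (Int.dvd_of_emod_eq_zero h.symm) k.2⟩, k.1 / N)
  left_inv := by
    rintro ⟨⟨j, hj⟩, t⟩
    rw [Finset.mem_Ioo] at hj
    have h1 : ((N:ℤ) * t + j) % N = j := by
      rw [add_comm, Int.add_mul_emod_self_left, Int.emod_eq_of_lt hj.1.le hj.2]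
    have h2 : ((N:ℤ) * t + j) / N = t := by
      have hN0 : (N:ℤ) ≠ 0 := by positivity
      rw [add_comm, Int.add_mul_ediv_left j t hN0,
        Int.ediv_eq_zero_of_lt hj.1.le hj.2, zero_add]
    simp only [Prod.mk.injEq, Subtype.mk.injEq]
    exact ⟨h1, h2⟩
  right_inv := by
    rintro ⟨k, hk⟩
    simp only [Subtype.mk.injEq]
    exact Int.mul_ediv_add_emod k N

lemma summable_F (N m : ℕ) (hN : 2 ≤ N) (hm : 1 ≤ m) (c : ℝ) :
    Summable (fun k : {k : ℤ // ¬ (N : ℤ) ∣ k} =>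
      Complex.exp (2 * Real.pi * Complex.I * ((k : ℤ) : ℂ) * (c : ℂ)) *
        (Lcoeff N m k : ℂ) / (((k : ℤ) : ℂ)) ^ (2 * m)) := by
  apply Summable.of_norm_bounded
    (g := fun k : {k : ℤ // ¬ (N : ℤ) ∣ k} => (N:ℝ)^(2*m) * (1 / ((k : ℤ) : ℝ) ^ (2*m)))
  · exact (((summable_int_pow m hm).subtype _).mul_left _)
  · rintro ⟨k, hk⟩
    simp only
    have hk0 : k ≠ 0 := fun h => hk (h ▸ dvd_zero _)
    have hkR : ((k:ℝ)) ^ (2*m) ≠ 0 := by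
      apply pow_ne_zero; exact_mod_cast hk0
    have hexp : ‖Complex.exp (2 * Real.pi * Complex.I * ((k : ℤ) : ℂ) * (c : ℂ))‖ = 1 := by
      have : 2 * (Real.pi:ℂ) * Complex.I * ((k : ℤ) : ℂ) * (c : ℂ) =
          ((2 * Real.pi * k * c : ℝ) : ℂ) * Complex.I := by push_cast; ring
      rw [this, Complex.norm_exp_ofReal_mul_I]
    have hpow : ‖((k : ℂ)) ^ (2 * m)‖ = (k:ℝ) ^ (2*m) := by
      rw [norm_pow, Complex.norm_intCast, pow_abs _ _,
        _root_.abs_of_nonneg ((even_two_mul m).pow_nonneg ((k:ℝ)))]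
    rw [norm_div, norm_mul, hexp, one_mul, hpow, Complex.norm_real,
      Real.norm_eq_abs, _root_.abs_of_nonneg (Lcoeff_nonneg N m hN hm k hk)]
    rw [mul_one_div, div_le_div_iff_of_pos_right]
    · exact Lcoeff_le N m hN hm k hk
    · exact lt_of_le_of_ne ((even_two_mul m).pow_nonneg _) (Ne.symm hkR)

lemma innerSumAux (N m : ℕ) (hN : 2 ≤ N) (hm : 1 ≤ m) (β β' : ℕ) (j : ℤ)
    (hj : j ∈ Finset.Ioo (0:ℤ) (N:ℤ)) :
    ∑' t : ℤ, Complex.exp (2 * Real.pi * Complex.I * (((N:ℤ) * t + j : ℤ) : ℂ) *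
        (((β : ℝ) / N - (β' : ℝ) / N : ℝ) : ℂ)) *
      (Lcoeff N m ((N:ℤ) * t + j) : ℂ) / (((N:ℤ) * t + j : ℤ) : ℂ) ^ (2 * m)
    = Complex.exp (2 * Real.pi * Complex.I * (j : ℂ) *
        (((β : ℝ) / N - (β' : ℝ) / N : ℝ) : ℂ)) := by
  rw [Finset.mem_Ioo] at hj
  have hN0 : (N:ℝ) ≠ 0 := by positivity
  have hNC : (N:ℂ) ≠ 0 := by exact_mod_cast hN0
  have hNj : ¬ (N:ℤ) ∣ j := fun h =>
    absurd (Int.le_of_dvd hj.1 h) (not_le.mpr hj.2)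
  set A : ℂ := Complex.exp (2 * Real.pi * Complex.I * (j : ℂ) *
    (((β : ℝ) / N - (β' : ℝ) / N : ℝ) : ℂ)) with hA
  have hterm : ∀ t : ℤ,
      Complex.exp (2 * Real.pi * Complex.I * (((N:ℤ) * t + j : ℤ) : ℂ) *
          (((β : ℝ) / N - (β' : ℝ) / N : ℝ) : ℂ)) *
        (Lcoeff N m ((N:ℤ) * t + j) : ℂ) / (((N:ℤ) * t + j : ℤ) : ℂ) ^ (2 * m)
      = A * ((((Sval N m j)⁻¹ * (1 / ((N:ℝ) * t + j) ^ (2 * m))) : ℝ) : ℂ) := by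
    intro t
    have hexp : Complex.exp (2 * Real.pi * Complex.I * (((N:ℤ) * t + j : ℤ) : ℂ) *
        (((β : ℝ) / N - (β' : ℝ) / N : ℝ) : ℂ)) = A := by
      have hsplit : 2 * (Real.pi:ℂ) * Complex.I * (((N:ℤ) * t + j : ℤ) : ℂ) *
          (((β : ℝ) / N - (β' : ℝ) / N : ℝ) : ℂ)
          = ((t * ((β:ℤ) - (β':ℤ)) : ℤ) : ℂ) * (2 * Real.pi * Complex.I)
            + 2 * Real.pi * Complex.I * (j : ℂ) *
              (((β : ℝ) / N - (β' : ℝ) / N : ℝ) : ℂ) := by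
        push_cast
        field_simp
      rw [hsplit, Complex.exp_add, Complex.exp_int_mul_two_pi_mul_I, one_mul, hA]
    have hL : Lcoeff N m ((N:ℤ) * t + j) = (Sval N m j)⁻¹ := by
      rw [Lcoeff_eq_Sval N m (by omega), Sval_shift]
    have hden : ((((N:ℤ) * t + j : ℤ)) : ℂ) ^ (2 * m)
        = ((((N:ℝ) * t + j) ^ (2 * m) : ℝ) : ℂ) := by push_cast; ring
    rw [hexp, hL, hden]
    push_cast
    ring
  rw [tsum_congr hterm, tsum_mul_left, ← Complex.ofReal_tsum, tsum_mul_left]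
  have : ∑' t : ℤ, 1 / ((N:ℝ) * t + j) ^ (2 * m) = Sval N m j := rfl
  rw [this, inv_mul_cancel₀ (Sval_pos N m hN hm j hNj).ne', Complex.ofReal_one, mul_one]

lemma sum_exp_eval (N β β' : ℕ) (hN : 2 ≤ N) (hβ1 : 1 ≤ β) (hβN : β ≤ N)
    (hβ'1 : 1 ≤ β') (hβ'N : β' ≤ N) :
    ∑ j ∈ Finset.Ioo (0:ℤ) (N:ℤ), Complex.exp (2 * Real.pi * Complex.I * (j : ℂ) *
        (((β : ℝ) / N - (β' : ℝ) / N : ℝ) : ℂ))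
    = if β = β' then (N:ℂ) - 1 else -1 := by
  have hN0 : (N:ℝ) ≠ 0 := by positivity
  have hNC : (N:ℂ) ≠ 0 := by exact_mod_cast hN0
  by_cases hββ : β = β'
  · subst hββ
    simp only [if_pos rfl, sub_self, Complex.ofReal_zero, mul_zero, Complex.exp_zero]
    rw [Finset.sum_const, Int.card_Ioo, nsmul_eq_mul, mul_one]
    have : ((N:ℤ) - 0 - 1).toNat = N - 1 := by omega
    rw [this]
    push_cast [Nat.cast_sub (by omega : 1 ≤ N)]
    ring
  · rw [if_neg hββ]
    set c : ℝ := (β : ℝ) / N - (β' : ℝ) / N with hc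
    set x : ℂ := Complex.exp (2 * Real.pi * Complex.I * (c : ℂ)) with hx
    have himg : Finset.Ioo (0:ℤ) (N:ℤ) =
        (Finset.Ioo (0:ℕ) N).image (fun n : ℕ => (n:ℤ)) := by
      ext j
      simp only [Finset.mem_Ioo, Finset.mem_image]
      constructor
      · rintro ⟨h1, h2⟩
        exact ⟨j.toNat, ⟨by omega, by omega⟩, by omega⟩
      · rintro ⟨n, ⟨h1, h2⟩, rfl⟩
        exact ⟨by exact_mod_cast h1, by exact_mod_cast h2⟩
    rw [himg, Finset.sum_image (by intro a _ b _ h; exact Nat.cast_injective h)]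
    have hpow : ∀ n : ℕ, Complex.exp (2 * Real.pi * Complex.I * ((n:ℤ) : ℂ) * (c : ℂ))
        = x ^ n := by
      intro n
      rw [hx, ← Complex.exp_nat_mul]
      congr 1
      push_cast
      ring
    rw [Finset.sum_congr rfl (fun n _ => hpow n)]
    have hx1 : x ≠ 1 := by
      intro h
      rw [hx, Complex.exp_eq_one_iff] at h
      obtain ⟨n, hn⟩ := h
      have h2pi : (2 * (Real.pi:ℂ) * Complex.I) ≠ 0 := by
        simp [Real.pi_ne_zero, Complex.I_ne_zero]
      have hcn : (c : ℂ) = (n : ℂ) := by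
        apply mul_left_cancel₀ h2pi
        linear_combination hn
      have hcn' : c = (n : ℝ) := by exact_mod_cast hcn
      rw [hc] at hcn'
      have hβint : ((β:ℤ) - β' : ℝ) = ((N * n : ℤ) : ℝ) := by
        push_cast
        field_simp at hcn'
        push_cast at hcn' ⊢
        linarith
      have hβz : (β:ℤ) - β' = N * n := by exact_mod_cast hβint
      have hne : (β:ℤ) - β' ≠ 0 := by
        intro h0
        exact hββ (by omega)
      have hdvd : (N:ℤ) ∣ |(β:ℤ) - β'| := (dvd_abs _ _).mpr ⟨n, hβz⟩
      have hle := Int.le_of_dvd (abs_pos.mpr hne) hdvd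
      have habs : |(β:ℤ) - β'| < N := abs_lt.mpr ⟨by omega, by omega⟩
      exact absurd (hle.trans_lt habs) (lt_irrefl _)
    have hxN : x ^ N = 1 := by
      rw [hx, ← Complex.exp_nat_mul]
      have harg : (N:ℂ) * (2 * Real.pi * Complex.I * (c:ℂ)) =
          (((β:ℤ) - (β':ℤ) : ℤ) : ℂ) * (2 * Real.pi * Complex.I) := by
        rw [hc]
        push_cast
        field_simp
      rw [harg, Complex.exp_int_mul_two_pi_mul_I]
    have hgeom : ∑ n ∈ Finset.range N, x ^ n = 0 := by
      rw [geom_sum_eq hx1, hxN, sub_self, zero_div]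
    have hsplit : ∑ n ∈ Finset.range N, x ^ n = x ^ 0 + ∑ n ∈ Finset.Ioo 0 N, x ^ n := by
      rw [Finset.range_eq_Ico, Finset.sum_eq_sum_Ico_succ_bot (by omega : 0 < N)]
      rw [Finset.Ico_add_one_left_eq_Ioo]
    rw [hsplit, pow_zero] at hgeom
    linear_combination hgeom

set_option maxHeartbeats 2000000 in
theorem Ccoeff_interpolates (N m : ℕ) (hN : 2 ≤ N) (hm : 1 ≤ m) (β β' : ℕ)
    (hβ : β ∈ Finset.Icc 1 N) (hβ' : β' ∈ Finset.Icc 1 N) :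
    Ccoeff N m β ((β' : ℝ) / N) = if β = β' then 1 else 0 := by
  rw [Finset.mem_Icc] at hβ hβ'
  have hNC : (N:ℂ) ≠ 0 := Nat.cast_ne_zero.mpr (by omega)
  unfold Ccoeff
  set F := fun k : {k : ℤ // ¬ (N : ℤ) ∣ k} =>
    Complex.exp (2 * Real.pi * Complex.I * (((k:ℤ)) : ℂ) *
        (((β : ℝ) / N - (β' : ℝ) / N : ℝ) : ℂ)) *
      (Lcoeff N m k : ℂ) / (((k:ℤ)) : ℂ) ^ (2 * m) with hF
  have hT : ∑' k : {k : ℤ // ¬ (N : ℤ) ∣ k}, F k = if β = β' then (N:ℂ) - 1 else -1 := by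
    rw [← (resEquiv N hN).tsum_eq F]
    have hs : Summable (fun p : (Finset.Ioo (0:ℤ) (N:ℤ)) × ℤ => F ((resEquiv N hN) p)) :=
      ((resEquiv N hN).summable_iff).mpr (summable_F N m hN hm _)
    rw [Summable.tsum_prod hs]
    have hin : ∀ j : (Finset.Ioo (0:ℤ) (N:ℤ)),
        ∑' t : ℤ, F ((resEquiv N hN) (j, t)) =
          Complex.exp (2 * Real.pi * Complex.I * ((j:ℤ) : ℂ) *
            (((β : ℝ) / N - (β' : ℝ) / N : ℝ) : ℂ)) := by
      intro j
      have : ∀ t : ℤ, F ((resEquiv N hN) (j, t)) =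
          Complex.exp (2 * Real.pi * Complex.I * (((N:ℤ) * t + (j:ℤ) : ℤ) : ℂ) *
              (((β : ℝ) / N - (β' : ℝ) / N : ℝ) : ℂ)) *
            (Lcoeff N m ((N:ℤ) * t + (j:ℤ)) : ℂ) /
              (((N:ℤ) * t + (j:ℤ) : ℤ) : ℂ) ^ (2 * m) := fun t => rfl
      rw [tsum_congr this]
      exact innerSumAux N m hN hm β β' (j:ℤ) j.2
    rw [tsum_congr hin,
      Finset.tsum_subtype (Finset.Ioo (0:ℤ) (N:ℤ)) (fun j : ℤ =>
        Complex.exp (2 * Real.pi * Complex.I * (j : ℂ) *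
          (((β : ℝ) / N - (β' : ℝ) / N : ℝ) : ℂ)))]
    exact sum_exp_eval N β β' hN hβ.1 hβ.2 hβ'.1 hβ'.2
  rw [hT]
  by_cases h : β = β'
  · rw [if_pos h, if_pos h]
    field_simp
    ring
  · rw [if_neg h, if_neg h]
    ring
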